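/- For the Markov ambiguity set with independent types, the optimal value of the distributionally robust mechanism design problem equals max_i μ̲_i: the Dirac distribution at μ̲ has independent marginals and lies in the ambiguity set, bounding the value from above, and the constant allocation to i* ∈ argmax_i μ̲_i attains it. -/

import Mathlib

open MeasureTheory

/-- The type space: every coordinate lies in `[tlo i, thi i]`. -/
def InT {ι : Type*} (tlo thi : ι → ℝ) (t : ι → ℝ) : Prop :=
  ∀ i, t i ∈ Set.Icc (tlo i) (thi i)

/-- Membership in the Markov ambiguity set: a probability distribution supported on the
type space whose marginal means lie in `[mlo i, mhi i]`. -/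
def InP {ι : Type*} [Fintype ι] (tlo thi mlo mhi : ι → ℝ) (P : Measure (ι → ℝ)) : Prop :=
  IsProbabilityMeasure P ∧ (∀ᵐ t ∂P, InT tlo thi t) ∧
    ∀ i, ∫ t, t i ∂P ∈ Set.Icc (mlo i) (mhi i)

/-- The principal's payoff in scenario `t`. -/
def Pay {ι : Type*} [Fintype ι] (c : ι → ℝ) (p q : (ι → ℝ) → ι → ℝ) (t : ι → ℝ) : ℝ :=
  ∑ i, (p t i * t i - q t i * c i)

/-- Feasibility: values in `[0,1]`, `q ≤ p`, and total allocation at most one, on the type space. -/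
def Feas {ι : Type*} [Fintype ι] (tlo thi : ι → ℝ) (p q : (ι → ℝ) → ι → ℝ) : Prop :=
  ∀ t, InT tlo thi t →
    (∀ i, 0 ≤ q t i ∧ q t i ≤ p t i ∧ p t i ≤ 1) ∧ ∑ i, p t i ≤ 1

/-- Incentive compatibility: no agent gains by misreporting his type. -/
def IC {ι : Type*} [DecidableEq ι] (tlo thi : ι → ℝ) (p q : (ι → ℝ) → ι → ℝ) : Prop :=
  ∀ i, ∀ t, InT tlo thi t → ∀ s ∈ Set.Icc (tlo i) (thi i),
    p (Function.update t i s) i - q (Function.update t i s) i ≤ p t i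

/-- The coordinates `t̃_1, …, t̃_I` are mutually independent under `P`. -/
def IndepCoords {ι : Type*} [Fintype ι] (P : MeasureTheory.Measure (ι → ℝ)) : Prop :=
  ProbabilityTheory.iIndepFun (fun i (t : ι → ℝ) => t i) P

/-- For the Markov ambiguity set with independent types, the optimal
value of the distributionally robust mechanism design problem equals `max_i μ̲_i`: the
Dirac distribution at `μ̲` has independent coordinates and lies in the ambiguity set,
every feasible incentive-compatible mechanism has worst-case expected payoff at most
`max_i μ̲_i`, and the constant allocation to `i* ∈ argmax_i μ̲_i` attains this value. -/
theorem stmt_16 {ι : Type*} [Fintype ι] [Nonempty ι] [DecidableEq ι]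
    (tlo thi mlo mhi c : ι → ℝ)
    (h0 : ∀ i, 0 ≤ tlo i) (h1 : ∀ i, tlo i < mlo i) (h2 : ∀ i, mlo i ≤ mhi i)
    (h3 : ∀ i, mhi i < thi i) (hc : ∀ i, 0 < c i)
    (istar : ι) (hstar : ∀ i, mlo i ≤ mlo istar) :
    (InP tlo thi mlo mhi (Measure.dirac mlo) ∧ IndepCoords (Measure.dirac mlo)) ∧
    (∀ p q : (ι → ℝ) → ι → ℝ,
      (∀ i, Measurable fun t => p t i) → (∀ i, Measurable fun t => q t i) →
      Feas tlo thi p q → IC tlo thi p q →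
      sInf {x : ℝ | ∃ P : Measure (ι → ℝ), InP tlo thi mlo mhi P ∧ IndepCoords P ∧
          x = ∫ t, Pay c p q t ∂P} ≤
        Finset.univ.sup' Finset.univ_nonempty mlo) ∧
    sInf {x : ℝ | ∃ P : Measure (ι → ℝ), InP tlo thi mlo mhi P ∧ IndepCoords P ∧
        x = ∫ t, Pay c (fun _ i => if i = istar then 1 else 0) (fun _ _ => 0) t ∂P} =
      Finset.univ.sup' Finset.univ_nonempty mlo := by

  classical
  have hsup_eq : Finset.univ.sup' Finset.univ_nonempty mlo = mlo istar := by
    apply le_antisymm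
    · exact Finset.sup'_le _ _ fun i _ => hstar i
    · exact Finset.le_sup' _ (Finset.mem_univ istar)
  have hInT : InT tlo thi mlo := fun i =>
    ⟨(h1 i).le, ((h2 i).trans_lt (h3 i)).le⟩
  have hInP : InP tlo thi mlo mhi (Measure.dirac mlo) := by
    refine ⟨inferInstance, ?_, ?_⟩
    · rw [ae_dirac_eq]; exact Filter.eventually_pure.2 hInT
    · intro i
      rw [integral_dirac' (fun t : ι → ℝ => t i) mlo
        ((measurable_pi_apply i).stronglyMeasurable)]
      exact ⟨le_rfl, h2 i⟩
  have hIndep : IndepCoords (Measure.dirac mlo) := by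
    rw [IndepCoords, ProbabilityTheory.iIndepFun_iff_measure_inter_preimage_eq_mul]
    intro S sets hsets
    have hm : ∀ i ∈ S, MeasurableSet ((fun t : ι → ℝ => t i) ⁻¹' sets i) :=
      fun i hi => (hsets i hi).preimage (measurable_pi_apply i)
    simp only [Measure.dirac_apply]
    by_cases h : ∀ i ∈ S, mlo i ∈ sets i
    · have hmem : mlo ∈ ⋂ i ∈ S, (fun t : ι → ℝ => t i) ⁻¹' sets i := by
        simpa using h
      rw [Set.indicator_of_mem hmem]
      symm
      refine Finset.prod_eq_one fun i hi => ?_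
      simp [Set.indicator_apply, h i hi]
    · push_neg at h
      obtain ⟨i0, hi0S, hi0⟩ := h
      have hnot : mlo ∉ ⋂ i ∈ S, (fun t : ι → ℝ => t i) ⁻¹' sets i := by
        simp only [Set.mem_iInter]
        push_neg
        exact ⟨i0, hi0S, hi0⟩
      rw [Set.indicator_of_notMem hnot]
      symm
      apply Finset.prod_eq_zero hi0S
      simp [Set.indicator_apply, hi0]
  refine ⟨⟨hInP, hIndep⟩, ?_, ?_⟩
  · intro p q hp hq hfeas _hic
    set s : Set ℝ := {x : ℝ | ∃ P : Measure (ι → ℝ), InP tlo thi mlo mhi P ∧ IndepCoords P ∧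
          x = ∫ t, Pay c p q t ∂P} with hs
    have hPayMeas : StronglyMeasurable (Pay c p q) := by
      apply Measurable.stronglyMeasurable
      apply Finset.measurable_sum
      intro i _
      exact ((hp i).mul (measurable_pi_apply i)).sub ((hq i).mul measurable_const)
    have hmem : Pay c p q mlo ∈ s := by
      refine ⟨Measure.dirac mlo, hInP, hIndep, ?_⟩
      rw [integral_dirac' _ _ hPayMeas]
    have hub : Pay c p q mlo ≤ Finset.univ.sup' Finset.univ_nonempty mlo := by
      rw [hsup_eq]
      obtain ⟨hbox, hsum⟩ := hfeas mlo hInT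
      have h01 : ∀ i, 0 ≤ p mlo i ∧ p mlo i ≤ 1 := fun i =>
        ⟨(hbox i).1.trans (hbox i).2.1, (hbox i).2.2⟩
      calc Pay c p q mlo ≤ ∑ i, p mlo i * mlo i := by
            apply Finset.sum_le_sum
            intro i _
            have : 0 ≤ q mlo i * c i := mul_nonneg (hbox i).1 (hc i).le
            linarith
        _ ≤ ∑ i, p mlo i * mlo istar := by
            apply Finset.sum_le_sum
            intro i _
            exact mul_le_mul_of_nonneg_left (hstar i) (h01 i).1
        _ = (∑ i, p mlo i) * mlo istar := by rw [Finset.sum_mul]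
        _ ≤ 1 * mlo istar := by
            apply mul_le_mul_of_nonneg_right hsum
            exact ((h0 istar).trans (h1 istar).le)
        _ = mlo istar := one_mul _
    by_cases hbdd : BddBelow s
    · exact (csInf_le hbdd hmem).trans hub
    · rw [csInf_of_not_bddBelow hbdd, Real.sInf_empty, hsup_eq]
      exact (h0 istar).trans (h1 istar).le
  · have hPayEq : (Pay c (fun _ i => if i = istar then (1:ℝ) else 0) (fun _ _ => 0))
        = fun t => t istar := by
      funext t
      simp [Pay, ite_mul, Finset.sum_ite_eq']
    have hlb : ∀ x ∈ {x : ℝ | ∃ P : Measure (ι → ℝ), InP tlo thi mlo mhi P ∧ IndepCoords P ∧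
        x = ∫ t, Pay c (fun _ i => if i = istar then 1 else 0) (fun _ _ => 0) t ∂P},
        mlo istar ≤ x := by
      rintro x ⟨P, hP, _, rfl⟩
      have : (∫ t, Pay c (fun _ i => if i = istar then (1:ℝ) else 0) (fun _ _ => 0) t ∂P)
          = ∫ t, t istar ∂P := by rw [hPayEq]
      rw [this]
      exact (hP.2.2 istar).1
    have hmem : mlo istar ∈ {x : ℝ | ∃ P : Measure (ι → ℝ), InP tlo thi mlo mhi P ∧ IndepCoords P ∧
        x = ∫ t, Pay c (fun _ i => if i = istar then 1 else 0) (fun _ _ => 0) t ∂P} := by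
      refine ⟨Measure.dirac mlo, hInP, hIndep, ?_⟩
      rw [hPayEq, integral_dirac' (fun t : ι → ℝ => t istar) mlo
        ((measurable_pi_apply istar).stronglyMeasurable)]
    rw [hsup_eq]
    apply le_antisymm
    · exact csInf_le ⟨mlo istar, hlb⟩ hmem
    · exact le_csInf ⟨_, hmem⟩ hlb
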